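/- Suppose f : ℝ → ℝ satisfies f(x) ≥ 0 and |f''''(x)| ≤ 1 for all x ∈ ℝ. Then |f'(x)| ≤ (8/3) f(x)^{3/4} + (8/3) f(x)^{1/2} |f''(x)|^{1/2} for all x ∈ ℝ. -/

import Mathlib

open Set

private lemma itdw_eq {f : ℝ → ℝ} (hf : ContDiff ℝ 4 f) {s : Set ℝ}
    (hs : UniqueDiffOn ℝ s) {x : ℝ} (hx : x ∈ s) {m : ℕ} (hm : m ≤ 4) :
    iteratedDerivWithin m f s x = iteratedDeriv m f x := by
  rw [iteratedDerivWithin_eq_iteratedFDerivWithin, iteratedDeriv_eq_iteratedFDeriv]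
  congr 1
  exact (((contDiff_iff_ftaylorSeries.mp hf).hasFTaylorSeriesUpToOn
    s).eq_iteratedFDerivWithin_of_uniqueDiffOn (by exact_mod_cast hm) hs hx).symm

/-- Taylor nonnegativity for positive increments. -/
private lemma taylor_pos {f : ℝ → ℝ} (hf : ContDiff ℝ 4 f)
    (h0 : ∀ x, 0 ≤ f x) (h4 : ∀ x, |iteratedDeriv 4 f x| ≤ 1) (x t : ℝ) (ht : 0 < t) :
    0 ≤ f x + t * deriv f x + t ^ 2 / 2 * iteratedDeriv 2 f x
        + t ^ 3 / 6 * iteratedDeriv 3 f x + t ^ 4 / 24 := by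
  have hxy : x < x + t := by linarith
  have hud : UniqueDiffOn ℝ (Icc x (x + t)) := uniqueDiffOn_Icc hxy
  have hcd : ContDiffOn ℝ 3 f (Icc x (x + t)) :=
    (hf.of_le (by norm_num)).contDiffOn
  have hdo : DifferentiableOn ℝ (iteratedDerivWithin 3 f (Icc x (x + t))) (Ioo x (x + t)) :=
    ((hf.contDiffOn (s := Icc x (x + t))).differentiableOn_iteratedDerivWithin
      (by norm_num) hud).mono Set.Ioo_subset_Icc_self
  obtain ⟨ξ, hξ, hT⟩ := taylor_mean_remainder_lagrange (n := 3) hxy.ne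
    (by rwa [uIcc_of_le hxy.le]) (by rwa [uIcc_of_le hxy.le, uIoo_of_le hxy.le])
  rw [uIcc_of_le hxy.le] at hT
  rw [uIoo_of_le hxy.le] at hξ
  have hxmem : x ∈ Icc x (x + t) := Set.left_mem_Icc.mpr hxy.le
  have hTP : taylorWithinEval f 3 (Icc x (x + t)) x (x + t)
      = f x + t * deriv f x + t ^ 2 / 2 * iteratedDeriv 2 f x
        + t ^ 3 / 6 * iteratedDeriv 3 f x := by
    rw [taylor_within_apply]
    rw [Finset.sum_range_succ, Finset.sum_range_succ, Finset.sum_range_succ,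
      Finset.sum_range_succ, Finset.sum_range_zero]
    rw [itdw_eq hf hud hxmem (by norm_num),
      itdw_eq hf hud hxmem (by norm_num),
      itdw_eq hf hud hxmem (by norm_num),
      itdw_eq hf hud hxmem (by norm_num)]
    simp [iteratedDeriv_zero, iteratedDeriv_one, Nat.factorial]
    ring
  have hξ4 : iteratedDerivWithin 4 f (Icc x (x + t)) ξ = iteratedDeriv 4 f ξ :=
    itdw_eq hf hud (Set.Ioo_subset_Icc_self hξ) (le_refl _)
  rw [hTP, hξ4] at hT
  have hb := h4 ξ
  have h1 := abs_le.mp hb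
  have hfnn := h0 (x + t)
  have ht4 : (0:ℝ) < t ^ 4 := by positivity
  have hsimp : (x + t - x) = t := by ring
  rw [hsimp] at hT
  norm_num [Nat.factorial] at hT
  nlinarith [hT, hfnn, h1.1, h1.2, ht4]

/-- Taylor nonnegativity for all increments. -/
private lemma taylor_all {f : ℝ → ℝ} (hf : ContDiff ℝ 4 f)
    (h0 : ∀ x, 0 ≤ f x) (h4 : ∀ x, |iteratedDeriv 4 f x| ≤ 1) (x t : ℝ) :
    0 ≤ f x + t * deriv f x + t ^ 2 / 2 * iteratedDeriv 2 f x
        + t ^ 3 / 6 * iteratedDeriv 3 f x + t ^ 4 / 24 := by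
  rcases lt_trichotomy t 0 with htn | rfl | htp
  · -- use g y = f (-y)
    set g : ℝ → ℝ := fun y => f (-y) with hg
    have hgf : ContDiff ℝ 4 g := hf.comp (contDiff_neg)
    have hg0 : ∀ y, 0 ≤ g y := fun y => h0 (-y)
    have hgit : ∀ (n : ℕ) (y : ℝ),
        iteratedDeriv n g y = (-1 : ℝ) ^ n * iteratedDeriv n f (-y) := by
      intro n y
      simpa [smul_eq_mul] using iteratedDeriv_comp_neg n f y
    have hg4 : ∀ y, |iteratedDeriv 4 g y| ≤ 1 := by
      intro y
      rw [hgit 4 y]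
      simpa [abs_mul] using h4 (-y)
    have := taylor_pos hgf hg0 hg4 (-x) (-t) (by linarith)
    have e1 : deriv g (-x) = - deriv f x := by
      have := hgit 1 (-x)
      simpa [iteratedDeriv_one] using this
    have e2 : iteratedDeriv 2 g (-x) = iteratedDeriv 2 f x := by
      simpa using hgit 2 (-x)
    have e3 : iteratedDeriv 3 g (-x) = - iteratedDeriv 3 f x := by
      rw [hgit 3 (-x)]; ring_nf
    have e0 : g (-x) = f x := by simp [hg]
    rw [e0, e1, e2, e3] at this
    nlinarith [this]
  · simpa using h0 x
  · exact taylor_pos hf h0 h4 x t htp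

/-- The key bound for every `h > 0`. -/
private lemma key_bound {f : ℝ → ℝ} (hf : ContDiff ℝ 4 f)
    (h0 : ∀ x, 0 ≤ f x) (h4 : ∀ x, |iteratedDeriv 4 f x| ≤ 1) (x h : ℝ) (hh : 0 < h) :
    |deriv f x| ≤ 3 / 2 * f x / h + h * |iteratedDeriv 2 f x| + h ^ 3 / 6 := by
  set p := deriv f x
  set c := iteratedDeriv 2 f x
  have T1 := taylor_all hf h0 h4 x (-h)
  have T2 := taylor_all hf h0 h4 x (2 * h)
  have T3 := taylor_all hf h0 h4 x h
  have T4 := taylor_all hf h0 h4 x (-(2 * h))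
  have hc1 : c ≤ |c| := le_abs_self c
  have hc2 : -|c| ≤ c := neg_abs_le c
  have hkey : 6 * h * |p| ≤ 9 * f x + 6 * h ^ 2 * |c| + h ^ 4 := by
    rcases abs_cases p with ⟨hp, _⟩ | ⟨hp, _⟩ <;> rw [hp] <;> nlinarith [T1, T2, T3, T4, sq_nonneg h]
  have hrw : 3 / 2 * f x / h + h * |c| + h ^ 3 / 6
      = (9 * f x + 6 * h ^ 2 * |c| + h ^ 4) / (6 * h) := by
    field_simp
    ring
  rw [hrw, le_div_iff₀ (by positivity)]
  linarith [hkey]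

/-- Fefferman–Phong: if `f ≥ 0` and `|f''''| ≤ 1` on `ℝ`, then
`|f'(x)| ≤ (8/3) f(x)^(3/4) + (8/3) f(x)^(1/2) |f''(x)|^(1/2)`. -/
theorem first_deriv_bound (f : ℝ → ℝ) (hf : ContDiff ℝ 4 f)
    (h0 : ∀ x, 0 ≤ f x) (h4 : ∀ x, |iteratedDeriv 4 f x| ≤ 1) :
    ∀ x : ℝ, |deriv f x| ≤
      (8 / 3) * f x ^ ((3 : ℝ) / 4) +
      (8 / 3) * f x ^ ((1 : ℝ) / 2) * |iteratedDeriv 2 f x| ^ ((1 : ℝ) / 2) := by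
  intro x
  set p := deriv f x with hp
  set c := iteratedDeriv 2 f x with hc
  set a : ℝ := f x ^ ((1 : ℝ) / 4) with ha
  set b : ℝ := |c| ^ ((1 : ℝ) / 2) with hb
  have hfx : 0 ≤ f x := h0 x
  have hcnn : (0:ℝ) ≤ |c| := abs_nonneg c
  have ha0 : 0 ≤ a := Real.rpow_nonneg hfx _
  have hb0 : 0 ≤ b := Real.rpow_nonneg hcnn _
  have ha4 : a ^ 4 = f x := by
    rw [ha, ← Real.rpow_natCast (f x ^ ((1:ℝ)/4)) 4, ← Real.rpow_mul hfx]
    norm_num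
  have hb2 : b ^ 2 = |c| := by
    rw [hb, ← Real.rpow_natCast (|c| ^ ((1:ℝ)/2)) 2, ← Real.rpow_mul hcnn]
    norm_num
  have ha3 : f x ^ ((3:ℝ)/4) = a ^ 3 := by
    rw [ha, ← Real.rpow_natCast (f x ^ ((1:ℝ)/4)) 3, ← Real.rpow_mul hfx]
    norm_num
  have ha2 : f x ^ ((1:ℝ)/2) = a ^ 2 := by
    rw [ha, ← Real.rpow_natCast (f x ^ ((1:ℝ)/4)) 2, ← Real.rpow_mul hfx]
    norm_num
  rw [ha3, ha2]
  clear_value a b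
  -- goal: |p| ≤ 8/3 * a^3 + 8/3 * a^2 * b
  rcases eq_or_lt_of_le ha0 with haz | hapos
  · -- a = 0, so f x = 0
    have hfz : f x = 0 := by rw [← ha4, ← haz]; ring
    have hple : |p| ≤ 0 := by
      refine le_of_forall_pos_le_add fun ε hε => ?_
      obtain ⟨h, hhpos, hh1, hh2⟩ : ∃ h : ℝ, 0 < h ∧ h ≤ 1 ∧ h ≤ ε / (|c| + 1) :=
        ⟨min 1 (ε / (|c| + 1)), lt_min one_pos (by positivity), min_le_left _ _,
          min_le_right _ _⟩
      have := key_bound hf h0 h4 x h hhpos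
      rw [← hp, ← hc, hfz] at this
      have hcube : h ^ 3 ≤ h := pow_le_of_le_one hhpos.le hh1 (by norm_num)
      have hmul : h * (|c| + 1) ≤ ε :=
        (le_div_iff₀ (by positivity : (0:ℝ) < |c| + 1)).mp hh2
      have hz : 3 / 2 * 0 / h = 0 := by simp
      rw [hz] at this
      nlinarith [this, hcube, hmul, hhpos.le, hcnn]
    have : (0:ℝ) ≤ 8/3 * a^3 + 8/3 * a^2 * b := by positivity
    linarith
  · rcases le_or_gt b a with hba | hab
    · -- h = a
      have := key_bound hf h0 h4 x a hapos
      rw [← hp, ← hc, ← ha4, ← hb2] at this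
      have hdiv : 3 / 2 * a ^ 4 / a = 3 / 2 * a ^ 3 := by
        field_simp
      rw [hdiv] at this
      nlinarith [this, mul_le_mul_of_nonneg_left hba (mul_nonneg ha0 hb0)]
    · -- h = a^2 / b
      have hbpos : 0 < b := lt_of_le_of_lt ha0 hab
      have hhpos : 0 < a ^ 2 / b := by positivity
      have := key_bound hf h0 h4 x (a ^ 2 / b) hhpos
      rw [← hp, ← hc, ← ha4, ← hb2] at this
      have e1 : 3 / 2 * a ^ 4 / (a ^ 2 / b) = 3 / 2 * a ^ 2 * b := by
        field_simp
      have e2 : a ^ 2 / b * b ^ 2 = a ^ 2 * b := by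
        field_simp
      have e3 : (a ^ 2 / b) ^ 3 / 6 ≤ a ^ 3 / 6 := by
        rw [div_pow, div_div, div_le_div_iff₀ (by positivity) (by norm_num)]
        have : a ^ 3 ≤ b ^ 3 := pow_le_pow_left₀ ha0 hab.le 3
        nlinarith [pow_nonneg ha0 3, pow_nonneg hb0 3]
      rw [e1, e2] at this
      linarith [this, e3, mul_nonneg (sq_nonneg a) hb0, pow_nonneg ha0 3]
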